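/- For 0 < q < 1, a positive integer n, and a complex number s, the following identity holds: ([n]/q^{n-1})^{-s} - ([n]/q^n + 1)^{-s} = (q^n/[n])^s (q^{-s} - 1) + \sum_{k \geq 0} (-1)^k \frac{s(s+1)\cdots(s+k)}{(k+1)!} (q^n/[n])^{s+k+1}, where the series on the right converges absolutely. -/

import Mathlib

open Complex Finset
open Filter


noncomputable def binA (s : ℂ) (k : ℕ) : ℂ :=
  (-1) ^ k * (∏ i ∈ Finset.range k, (s + (i : ℂ))) / (k.factorial : ℂ)

lemma binA_zero (s : ℂ) : binA s 0 = 1 := by simp [binA]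

lemma binA_succ (s : ℂ) (k : ℕ) : binA s (k + 1) = -(s + k) / (k + 1) * binA s k := by
  have hk : ((k : ℂ) + 1) ≠ 0 := Nat.cast_add_one_ne_zero k
  have hf : ((k.factorial : ℂ)) ≠ 0 := Nat.cast_ne_zero.2 k.factorial_ne_zero
  simp only [binA, Finset.prod_range_succ, pow_succ, Nat.factorial_succ]
  push_cast
  field_simp

lemma norm_binA_succ (s : ℂ) (k : ℕ) :
    ‖binA s (k + 1)‖ = ‖s + k‖ / (k + 1) * ‖binA s k‖ := by
  rw [binA_succ, norm_mul, norm_div, norm_neg]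
  congr 2
  have : ((k : ℂ) + 1) = ((k + 1 : ℕ) : ℂ) := by push_cast; ring
  rw [this]
  simpa using Complex.norm_natCast (k + 1)

lemma summable_u (s : ℂ) {r : ℝ} (hr0 : 0 < r) (hr1 : r < 1) :
    Summable (fun k : ℕ => ‖binA s k‖ * k * r ^ (k - 1)) := by
  obtain ⟨r', hrr', hr'1⟩ := exists_between hr1
  apply summable_of_ratio_norm_eventually_le hr'1
  have hd : 0 < r' - r := by linarith
  set N : ℕ := ⌈‖s‖ * r / (r' - r)⌉₊ + 1 with hNdef
  rw [eventually_atTop]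
  refine ⟨N, fun k hk => ?_⟩
  have hk1 : 1 ≤ k := le_trans (by omega) hk
  have hkey : (‖s‖ + k) * r ≤ r' * k := by
    have h1 : ‖s‖ * r / (r' - r) ≤ k := by
      calc ‖s‖ * r / (r' - r) ≤ (⌈‖s‖ * r / (r' - r)⌉₊ : ℝ) := Nat.le_ceil _
      _ ≤ k := by exact_mod_cast le_trans (by omega) hk
    have h2 : ‖s‖ * r ≤ k * (r' - r) := by
      rwa [div_le_iff₀ hd] at h1
    nlinarith
  have hx : ‖binA s (k + 1)‖ * (↑(k + 1) : ℝ) * r ^ ((k + 1) - 1)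
      = ‖s + k‖ * ‖binA s k‖ * r ^ k := by
    rw [norm_binA_succ]
    have h0 : ((k : ℝ) + 1) ≠ 0 := by positivity
    push_cast
    field_simp
  rw [Real.norm_of_nonneg (by positivity), Real.norm_of_nonneg (by positivity), hx]
  have hsk : ‖s + (k : ℂ)‖ ≤ ‖s‖ + k := by
    calc ‖s + (k : ℂ)‖ ≤ ‖s‖ + ‖(k : ℂ)‖ := norm_add_le _ _
    _ = ‖s‖ + k := by simp [Complex.norm_natCast]
  have hrk : r ^ k = r ^ (k - 1) * r := by
    rw [← pow_succ]
    congr 1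
    omega
  calc ‖s + (k : ℂ)‖ * ‖binA s k‖ * r ^ k
      ≤ (‖s‖ + k) * ‖binA s k‖ * r ^ k := by
        apply mul_le_mul_of_nonneg_right (mul_le_mul_of_nonneg_right hsk (norm_nonneg _)) (by positivity)
    _ = ((‖s‖ + k) * r) * ‖binA s k‖ * r ^ (k - 1) := by rw [hrk]; ring
    _ ≤ (r' * k) * ‖binA s k‖ * r ^ (k - 1) := by
        apply mul_le_mul_of_nonneg_right (mul_le_mul_of_nonneg_right hkey (norm_nonneg _)) (by positivity)
    _ = r' * (‖binA s k‖ * k * r ^ (k - 1)) := by ring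

lemma summable_norm_binA (s : ℂ) {x : ℝ} (hx0 : 0 ≤ x) (hx1 : x < 1) :
    Summable (fun k : ℕ => ‖binA s k‖ * x ^ k) := by
  set r : ℝ := (x + 1) / 2 with hr
  have hr0 : 0 < r := by rw [hr]; linarith
  have hxr : x < r := by rw [hr]; linarith
  have hr1 : r < 1 := by rw [hr]; linarith
  have hu := summable_u s hr0 hr1
  rw [← summable_nat_add_iff 1]
  have hu1 : Summable (fun k : ℕ => r * (‖binA s (k + 1)‖ * ((k + 1 : ℕ) : ℝ) * r ^ ((k + 1) - 1))) :=
    ((summable_nat_add_iff 1).2 hu).mul_left r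
  apply Summable.of_nonneg_of_le (fun k => by positivity) _ hu1
  intro k
  have h1 : x ^ (k + 1) ≤ r ^ k * r := by
    rw [← pow_succ]
    exact pow_le_pow_left₀ hx0 hxr.le _
  have h2 : (r : ℝ) ^ k ≤ ((k : ℝ) + 1) * r ^ k := by
    nlinarith [pow_nonneg hr0.le k, (Nat.cast_nonneg k : (0:ℝ) ≤ k)]
  calc ‖binA s (k + 1)‖ * x ^ (k + 1) ≤ ‖binA s (k + 1)‖ * (r ^ k * r) :=
        mul_le_mul_of_nonneg_left h1 (norm_nonneg _)
    _ ≤ ‖binA s (k + 1)‖ * (((k : ℝ) + 1) * r ^ k * r) := by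
        have := mul_le_mul_of_nonneg_right h2 hr0.le
        nlinarith [norm_nonneg (binA s (k + 1)), pow_nonneg hr0.le k]
    _ = r * (‖binA s (k + 1)‖ * ((k + 1 : ℕ) : ℝ) * r ^ ((k + 1) - 1)) := by
        push_cast; ring_nf


lemma hasSum_binomial (s : ℂ) {x : ℝ} (hx0 : 0 ≤ x) (hx1 : x < 1) :
    HasSum (fun k : ℕ => binA s k * (x : ℂ) ^ k) (((1 + x : ℝ) : ℂ) ^ (-s)) := by
  set r : ℝ := (x + 1) / 2 with hrdef
  have hr0 : 0 < r := by rw [hrdef]; linarith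
  have hxr : x < r := by rw [hrdef]; linarith
  have hr1 : r < 1 := by rw [hrdef]; linarith
  set T : Set ℝ := Set.Ioo (-r) r with hTdef
  set g : ℕ → ℝ → ℂ := fun k t => binA s k * ((t : ℂ)) ^ k with hgdef
  set g' : ℕ → ℝ → ℂ := fun k t => binA s k * k * ((t : ℂ)) ^ (k - 1) with hg'def
  have hu := summable_u s hr0 hr1
  have h0T : (0 : ℝ) ∈ T := ⟨by linarith, hr0⟩
  have hxT : x ∈ T := ⟨by linarith, hxr⟩
  have hg : ∀ k (t : ℝ), t ∈ T → HasDerivAt (g k) (g' k t) t := by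
    intro k t _
    have h1 : HasDerivAt (fun y : ℝ => ((y : ℂ)) ^ k) ((k : ℂ) * (t : ℂ) ^ (k - 1)) t :=
      (hasDerivAt_pow k (t : ℂ)).comp_ofReal
    simpa [hgdef, hg'def, mul_assoc] using h1.const_mul (binA s k)
  have hg' : ∀ k (t : ℝ), t ∈ T → ‖g' k t‖ ≤ ‖binA s k‖ * k * r ^ (k - 1) := by
    intro k t ht
    have htr : |t| ≤ r := by
      rw [abs_le]; exact ⟨ht.1.le, ht.2.le⟩
    have : ‖g' k t‖ = ‖binA s k‖ * k * |t| ^ (k - 1) := by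
      simp [hg'def, norm_mul, norm_pow, Complex.norm_natCast, Complex.norm_real, mul_assoc]
    rw [this]
    have : |t| ^ (k - 1) ≤ r ^ (k - 1) := pow_le_pow_left₀ (abs_nonneg t) htr _
    have hb : (0:ℝ) ≤ ‖binA s k‖ * k := by positivity
    exact mul_le_mul_of_nonneg_left this hb
  have hsum0 : Summable (fun k => g k 0) := by
    apply summable_of_ne_finset_zero (s := {0})
    intro k hk
    simp only [Finset.mem_singleton] at hk
    simp [hgdef, zero_pow hk]
  have key : ∀ t ∈ T, HasDerivAt (fun y => ∑' k, g k y) (∑' k, g' k t) t := fun t ht =>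
    hasDerivAt_tsum_of_isPreconnected hu isOpen_Ioo (convex_Ioo _ _).isPreconnected
      hg hg' h0T hsum0 ht
  set F : ℝ → ℂ := fun y => ∑' k, g k y with hFdef
  have hFsum : ∀ t ∈ T, HasSum (fun k => g k t) (F t) := by
    intro t ht
    apply Summable.hasSum
    apply Summable.of_norm_bounded (summable_norm_binA s hr0.le hr1)
    intro k
    have htr : |t| ≤ r := by rw [abs_le]; exact ⟨ht.1.le, ht.2.le⟩
    have : ‖g k t‖ = ‖binA s k‖ * |t| ^ k := by
      simp [hgdef, norm_mul, norm_pow, Complex.norm_real]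
    rw [this]
    exact mul_le_mul_of_nonneg_left (pow_le_pow_left₀ (abs_nonneg t) htr _) (norm_nonneg _)
  have hDsum : ∀ t ∈ T, HasSum (fun k => g' k t) (∑' k, g' k t) := by
    intro t ht
    apply Summable.hasSum
    exact Summable.of_norm_bounded hu (fun k => hg' k t ht)
  have hODE : ∀ t ∈ T, (∑' k, g' k t) * (1 + (t : ℂ)) + s * F t = 0 := by
    intro t ht
    set D := ∑' k, g' k t with hDdef
    have hS2 := hDsum t ht
    have hA : HasSum (fun k => g' (k + 1) t) (D - ∑ i ∈ Finset.range 1, g' i t) :=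
      (hasSum_nat_add_iff' 1).2 hS2
    have hA0 : (∑ i ∈ Finset.range 1, g' i t) = 0 := by
      simp [hg'def]
    rw [hA0, sub_zero] at hA
    have hB : HasSum (fun k => g' k t * t) (D * t) := hS2.mul_right _
    have hC : HasSum (fun k => s * g k t) (s * F t) := (hFsum t ht).mul_left s
    have hcomb := (hA.add hB).add hC
    have hzero : (fun k => g' (k + 1) t + g' k t * (t : ℂ) + s * g k t) = fun _ => (0 : ℂ) := by
      funext k
      have hk1 : ((k : ℂ) + 1) ≠ 0 := Nat.cast_add_one_ne_zero k
      have hrec : ((k : ℂ) + 1) * binA s (k + 1) = -(s + k) * binA s k := by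
        rw [binA_succ]
        field_simp
      have htk : (t : ℂ) ^ (k - 1) * (t : ℂ) * (k : ℂ) = (t : ℂ) ^ k * (k : ℂ) := by
        cases k with
        | zero => simp
        | succ m => rw [Nat.add_sub_cancel, ← pow_succ]
      simp only [hg'def, hgdef, Nat.add_sub_cancel]
      push_cast
      calc binA s (k + 1) * ((k : ℂ) + 1) * (t : ℂ) ^ k
            + binA s k * (k : ℂ) * (t : ℂ) ^ (k - 1) * (t : ℂ)
            + s * (binA s k * (t : ℂ) ^ k)
          = (((k : ℂ) + 1) * binA s (k + 1)) * (t : ℂ) ^ k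
            + binA s k * ((t : ℂ) ^ (k - 1) * (t : ℂ) * (k : ℂ))
            + s * binA s k * (t : ℂ) ^ k := by ring
        _ = (-(s + k) * binA s k) * (t : ℂ) ^ k + binA s k * ((t : ℂ) ^ k * (k : ℂ))
            + s * binA s k * (t : ℂ) ^ k := by rw [hrec, htk]
        _ = 0 := by ring
    rw [hzero] at hcomb
    have := hcomb.unique hasSum_zero
    rw [hDdef]
    linear_combination this
  set h : ℝ → ℂ := fun y => F y * ((1 + y : ℝ) : ℂ) ^ s with hhdef
  have hker : ∀ t ∈ T, HasDerivAt h 0 t := by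
    intro t ht
    have ht1 : (0 : ℝ) < 1 + t := by have := ht.1; simp only [hTdef, Set.mem_Ioo] at ht; linarith [ht.1]
    have hw0 : ((1 + t : ℝ) : ℂ) ≠ 0 := by
      simp only [ne_eq, Complex.ofReal_eq_zero]; linarith
    have hcp : HasDerivAt (fun y : ℝ => ((1 + y : ℝ) : ℂ) ^ s)
        (s * ((1 + t : ℝ) : ℂ) ^ (s - 1)) t := by
      have hsl : (1 : ℂ) + (t : ℂ) ∈ Complex.slitPlane := by
        have he : (1 : ℂ) + (t : ℂ) = ((1 + t : ℝ) : ℂ) := by push_cast; ring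
        rw [he]
        exact Complex.ofReal_mem_slitPlane.2 ht1
      have h1 : HasDerivAt (fun z : ℂ => (1 + z) ^ s)
          (s * ((1 : ℂ) + (t : ℂ)) ^ (s - 1)) (t : ℂ) := by
        have := ((hasDerivAt_id ((t : ℝ) : ℂ)).const_add 1).cpow_const (c := s) hsl
        simpa using this
      have h2 := h1.comp_ofReal
      have hfun : (fun y : ℝ => ((1 + y : ℝ) : ℂ) ^ s) = fun y : ℝ => ((1 : ℂ) + (y : ℂ)) ^ s := by
        funext y; push_cast; ring_nf
      rw [hfun]
      convert h2 using 2
      push_cast; ring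
    have hder := (key t ht).mul hcp
    have hval : (∑' k, g' k t) * ((1 + t : ℝ) : ℂ) ^ s
        + F t * (s * ((1 + t : ℝ) : ℂ) ^ (s - 1)) = 0 := by
      have hws : ((1 + t : ℝ) : ℂ) ^ s = ((1 + t : ℝ) : ℂ) ^ (s - 1) * ((1 + t : ℝ) : ℂ) := by
        conv_lhs => rw [show s = (s - 1) + 1 by ring]
        rw [Complex.cpow_add _ _ hw0, Complex.cpow_one]
      have hode := hODE t ht
      have hc : (1 : ℂ) + (t : ℂ) = ((1 + t : ℝ) : ℂ) := by push_cast; ring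
      rw [hws]
      rw [hc] at hode
      linear_combination ((1 + t : ℝ) : ℂ) ^ (s - 1) * hode
    rw [hhdef]
    exact hval ▸ hder
  have hsub : Set.Icc (0 : ℝ) x ⊆ T := by
    intro t ht
    constructor
    · linarith [ht.1]
    · linarith [ht.2]
  have hcont : ContinuousOn h (Set.Icc 0 x) := fun t ht =>
    (hker t (hsub ht)).continuousAt.continuousWithinAt
  have hdz : ∀ t ∈ Set.Ico (0 : ℝ) x, HasDerivWithinAt h 0 (Set.Ici t) t := fun t ht =>
    (hker t (hsub (Set.mem_Icc.2 ⟨ht.1, ht.2.le⟩))).hasDerivWithinAt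
  have hconst := constant_of_has_deriv_right_zero hcont hdz x (Set.mem_Icc.2 ⟨hx0, le_refl x⟩)
  have hF0 : F 0 = 1 := by
    have he : F 0 = ∑' k, g k 0 := rfl
    rw [he, tsum_eq_single 0 (fun k hk => by simp [hgdef, zero_pow hk])]
    simp [hgdef, binA_zero]
  have hh0 : h 0 = 1 := by
    simp only [hhdef, hF0]
    norm_num
  rw [hh0] at hconst
  -- hconst : h x = 1, i.e. F x * ((1+x))^s = 1
  have hw0 : ((1 + x : ℝ) : ℂ) ≠ 0 := by
    simp only [ne_eq, Complex.ofReal_eq_zero]; linarith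
  have hws : ((1 + x : ℝ) : ℂ) ^ s ≠ 0 := by
    simp only [ne_eq, Complex.cpow_eq_zero_iff, not_and_or]
    left; exact hw0
  have hFx : F x = ((1 + x : ℝ) : ℂ) ^ (-s) := by
    rw [Complex.cpow_neg]
    exact eq_inv_of_mul_eq_one_left hconst
  have := hFsum x hxT
  rw [hFx] at this
  exact this

/-- The q-analogue `[n]_q = (1 - q^n)/(1 - q)`. -/
noncomputable def qNum (q : ℝ) (n : ℕ) : ℝ := (1 - q ^ n) / (1 - q)

lemma coef_eq_neg_binA (s : ℂ) (k : ℕ) :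
    (-1 : ℂ) ^ k * (∏ i ∈ Finset.range (k + 1), (s + (i : ℂ))) / ((k + 1).factorial : ℂ)
      = -binA s (k + 1) := by
  simp only [binA, pow_succ]
  ring

theorem translation_identity_one_var (q : ℝ) (hq0 : 0 < q) (hq1 : q < 1)
    (n : ℕ) (hn : 1 ≤ n) (s : ℂ) :
    Summable (fun k : ℕ =>
      ‖(-1 : ℂ) ^ k * (∏ i ∈ Finset.range (k + 1), (s + (i : ℂ))) /
        ((k + 1).factorial : ℂ) *
        ((q ^ n / qNum q n : ℝ) : ℂ) ^ (s + (k : ℂ) + 1)‖) ∧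
    ((qNum q n / q ^ (n - 1) : ℝ) : ℂ) ^ (-s)
      - ((qNum q n / q ^ n + 1 : ℝ) : ℂ) ^ (-s)
    = ((q ^ n / qNum q n : ℝ) : ℂ) ^ s * (((q : ℂ)) ^ (-s) - 1)
      + ∑' k : ℕ, (-1 : ℂ) ^ k * (∏ i ∈ Finset.range (k + 1), (s + (i : ℂ))) /
          ((k + 1).factorial : ℂ) *
          ((q ^ n / qNum q n : ℝ) : ℂ) ^ (s + (k : ℂ) + 1) := by
  have hq0' : q ≠ 0 := ne_of_gt hq0
  have hqn1 : q ^ n < 1 := pow_lt_one₀ hq0.le hq1 (by omega)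
  have hP : 0 < qNum q n := by
    unfold qNum
    apply div_pos <;> linarith
  have hPsum : qNum q n = ∑ i ∈ Finset.range n, q ^ i := by
    rw [geom_sum_eq (ne_of_lt hq1)]
    unfold qNum
    rw [div_eq_div_iff] <;> nlinarith
  set X : ℝ := q ^ n / qNum q n with hXdef
  have hX0 : 0 < X := div_pos (pow_pos hq0 n) hP
  have hX1 : X < 1 := by
    rw [hXdef, div_lt_one hP]
    calc q ^ n < q ^ (n - 1) := pow_lt_pow_right_of_lt_one₀ hq0 hq1 (by omega)
    _ ≤ qNum q n := by
        rw [hPsum]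
        exact Finset.single_le_sum (f := fun i => q ^ i)
          (fun i _ => (pow_pos hq0 i).le) (Finset.mem_range.2 (by omega))
  have hXC : ((X : ℝ) : ℂ) ≠ 0 := by
    simp only [ne_eq, Complex.ofReal_eq_zero]; exact ne_of_gt hX0
  -- exponent splitting
  have hcpow_split : ∀ k : ℕ, ((X : ℝ) : ℂ) ^ (s + (k : ℂ) + 1)
      = ((X : ℝ) : ℂ) ^ s * ((X : ℝ) : ℂ) ^ (k + 1) := by
    intro k
    have : s + (k : ℂ) + 1 = s + ((k + 1 : ℕ) : ℂ) := by push_cast; ring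
    rw [this, Complex.cpow_add _ _ hXC, Complex.cpow_natCast]
  -- the summand as a multiple of binA
  have hterm : ∀ k : ℕ, (-1 : ℂ) ^ k * (∏ i ∈ Finset.range (k + 1), (s + (i : ℂ))) /
        ((k + 1).factorial : ℂ) * ((X : ℝ) : ℂ) ^ (s + (k : ℂ) + 1)
      = -(((X : ℝ) : ℂ) ^ s) * (binA s (k + 1) * ((X : ℝ) : ℂ) ^ (k + 1)) := by
    intro k
    rw [coef_eq_neg_binA, hcpow_split]
    ring
  constructor
  · -- summability of norms
    have h1 : Summable (fun k : ℕ => X ^ s.re * (‖binA s (k + 1)‖ * X ^ (k + 1))) :=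
      (((summable_nat_add_iff 1).2 (summable_norm_binA s hX0.le hX1)).mul_left _)
    apply h1.congr
    intro k
    rw [hterm k]
    rw [norm_mul, norm_mul, norm_neg]
    have habs : ‖((X : ℝ) : ℂ) ^ s‖ = X ^ s.re :=
      Complex.norm_cpow_eq_rpow_re_of_pos hX0 s
    have habs2 : ‖((X : ℝ) : ℂ) ^ (k + 1)‖ = X ^ (k + 1) := by
      rw [norm_pow, Complex.norm_real, Real.norm_of_nonneg hX0.le]
    rw [habs, habs2]
  · -- the identity
    have hH := hasSum_binomial s hX0.le hX1
    have hH1 : HasSum (fun k => binA s (k + 1) * ((X : ℝ) : ℂ) ^ (k + 1))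
        (((1 + X : ℝ) : ℂ) ^ (-s) - 1) := by
      have := (hasSum_nat_add_iff' 1).2 hH
      simpa [binA_zero] using this
    have hH2 := hH1.mul_left (-(((X : ℝ) : ℂ) ^ s))
    have htsum : (∑' k : ℕ, (-1 : ℂ) ^ k * (∏ i ∈ Finset.range (k + 1), (s + (i : ℂ))) /
          ((k + 1).factorial : ℂ) * ((X : ℝ) : ℂ) ^ (s + (k : ℂ) + 1))
        = -(((X : ℝ) : ℂ) ^ s) * (((1 + X : ℝ) : ℂ) ^ (-s) - 1) := by
      rw [← hH2.tsum_eq]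
      exact tsum_congr (fun k => hterm k)
    rw [htsum]
    -- rewrite the two left-hand powers
    have harg : Complex.arg ((X : ℝ) : ℂ) ≠ Real.pi := by
      rw [Complex.arg_ofReal_of_nonneg hX0.le]
      exact (Real.pi_ne_zero).symm
    have hinv : ((X⁻¹ : ℝ) : ℂ) ^ (-s) = ((X : ℝ) : ℂ) ^ s := by
      rw [Complex.ofReal_inv, Complex.inv_cpow _ _ harg, Complex.cpow_neg, inv_inv]
    have hE1 : ((qNum q n / q ^ (n - 1) : ℝ) : ℂ) ^ (-s)
        = ((q : ℝ) : ℂ) ^ (-s) * ((X : ℝ) : ℂ) ^ s := by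
      have hreal : qNum q n / q ^ (n - 1) = q * X⁻¹ := by
        have hqn : q ^ n = q ^ (n - 1) * q := by
          rw [← pow_succ]; congr 1; omega
        rw [hXdef]
        field_simp
        rw [hqn]
      rw [hreal]
      have : ((q * X⁻¹ : ℝ) : ℂ) = ((q : ℝ) : ℂ) * ((X⁻¹ : ℝ) : ℂ) := by push_cast; ring
      rw [this, Complex.mul_cpow_ofReal_nonneg hq0.le (by positivity), hinv]
    have hE2 : ((qNum q n / q ^ n + 1 : ℝ) : ℂ) ^ (-s)
        = ((1 + X : ℝ) : ℂ) ^ (-s) * ((X : ℝ) : ℂ) ^ s := by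
      have hreal : qNum q n / q ^ n + 1 = (1 + X) * X⁻¹ := by
        rw [hXdef]
        field_simp
      rw [hreal]
      have : (((1 + X) * X⁻¹ : ℝ) : ℂ) = ((1 + X : ℝ) : ℂ) * ((X⁻¹ : ℝ) : ℂ) := by
        push_cast; ring
      rw [this, Complex.mul_cpow_ofReal_nonneg (by linarith) (by positivity), hinv]
    rw [hE1, hE2]
    ring
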